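/- Let (M,d) be a metric space and ℓ > 0, and let d_{[ℓ]} be the derived semi-intrinsic metric (chains with steps of size at most ℓ). If F : (M,d) → (M',d') is an L-biLipschitz bijection with L ≥ 1, then for all x,y ∈ M: (1/L)·d_{[Lℓ]}(x,y) ≤ d'_{[ℓ]}(F(x),F(y)) ≤ L·d_{[ℓ/L]}(x,y). -/

import Mathlib

open scoped ENNReal

/-- The derived semi-intrinsic metric with parameter `ℓ`:
the infimum of total lengths of chains from `p` to `q` whose steps have length at most `ℓ`
(`∞` if no such chain exists). -/
noncomputable def chainDist {M : Type*} [MetricSpace M] (ℓ : ℝ) (p q : M) : ℝ≥0∞ :=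
  ⨅ (k : ℕ) (x : Fin (k + 1) → M) (_ : x 0 = p) (_ : x (Fin.last k) = q)
    (_ : ∀ i : Fin k, dist (x i.castSucc) (x i.succ) ≤ ℓ),
    ∑ i : Fin k, ENNReal.ofReal (dist (x i.castSucc) (x i.succ))

lemma chainDist_map_le {M M' : Type*} [MetricSpace M] [MetricSpace M']
    (G : M → M') (C : ℝ) (hC : 0 < C)
    (hG : ∀ a b : M, dist (G a) (G b) ≤ C * dist a b)
    (ℓ ℓ' : ℝ) (hℓ : C * ℓ ≤ ℓ') (x y : M) :
    chainDist ℓ' (G x) (G y) ≤ ENNReal.ofReal C * chainDist ℓ x y := by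
  conv_rhs => rw [chainDist]
  simp only [ENNReal.mul_iInf_of_ne (by simp [hC] : ENNReal.ofReal C ≠ 0)
    (by simp : ENNReal.ofReal C ≠ ⊤), le_iInf_iff]
  intro k c hc0 hcl hstep
  calc chainDist ℓ' (G x) (G y)
      ≤ ∑ i : Fin k, ENNReal.ofReal (dist ((G ∘ c) i.castSucc) ((G ∘ c) i.succ)) := by
        refine iInf_le_of_le k (iInf_le_of_le (G ∘ c) (iInf_le_of_le (by simp [hc0])
          (iInf_le_of_le (by simp [hcl]) (iInf_le_of_le ?_ le_rfl))))
        intro i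
        exact le_trans (hG _ _) (le_trans (by
          exact mul_le_mul_of_nonneg_left (hstep i) hC.le) hℓ)
    _ ≤ ∑ i : Fin k, ENNReal.ofReal (C * dist (c i.castSucc) (c i.succ)) := by
        refine Finset.sum_le_sum fun i _ => ENNReal.ofReal_le_ofReal (hG _ _)
    _ = ENNReal.ofReal C * ∑ i : Fin k, ENNReal.ofReal (dist (c i.castSucc) (c i.succ)) := by
        rw [Finset.mul_sum]
        refine Finset.sum_congr rfl fun i _ => ?_
        rw [ENNReal.ofReal_mul hC.le]

/-- For an `L`-biLipschitz bijection `F` with `L ≥ 1`, the derived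
semi-intrinsic metrics satisfy
`(1/L) · d_{[Lℓ]}(x,y) ≤ d'_{[ℓ]}(F x, F y) ≤ L · d_{[ℓ/L]}(x,y)`. -/
theorem biLipschitz_chainDist_bounds
    {M M' : Type*} [MetricSpace M] [MetricSpace M']
    (F : M → M') (hF : Function.Bijective F)
    (L : ℝ) (hL : 1 ≤ L)
    (hlow : ∀ x y : M, (1 / L) * dist x y ≤ dist (F x) (F y))
    (hup : ∀ x y : M, dist (F x) (F y) ≤ L * dist x y) :
    ∀ (x y : M) (ℓ : ℝ), 0 < ℓ →
      (ENNReal.ofReal (1 / L)) * chainDist (L * ℓ) x y ≤ chainDist ℓ (F x) (F y) ∧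
      chainDist ℓ (F x) (F y) ≤ ENNReal.ofReal L * chainDist (ℓ / L) x y := by
  have hL0 : 0 < L := lt_of_lt_of_le one_pos hL
  intro x y ℓ hℓ
  constructor
  · obtain ⟨g, hg1, hg2⟩ := Function.bijective_iff_has_inverse.mp hF
    have hg : ∀ a b : M', dist (g a) (g b) ≤ L * dist a b := by
      intro a b
      have := hlow (g a) (g b)
      rw [hg2 a, hg2 b] at this
      calc dist (g a) (g b) = L * ((1/L) * dist (g a) (g b)) := by
            field_simp
        _ ≤ L * dist a b := mul_le_mul_of_nonneg_left this hL0.le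
    have key : chainDist (L * ℓ) x y ≤ ENNReal.ofReal L * chainDist ℓ (F x) (F y) := by
      have := chainDist_map_le g L hL0 hg ℓ (L * ℓ) le_rfl (F x) (F y)
      rwa [hg1 x, hg1 y] at this
    calc ENNReal.ofReal (1 / L) * chainDist (L * ℓ) x y
        ≤ ENNReal.ofReal (1 / L) * (ENNReal.ofReal L * chainDist ℓ (F x) (F y)) :=
          by gcongr
      _ = chainDist ℓ (F x) (F y) := by
          rw [← mul_assoc, ← ENNReal.ofReal_mul (by positivity)]
          rw [one_div, inv_mul_cancel₀ hL0.ne', ENNReal.ofReal_one, one_mul]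
  · exact chainDist_map_le F L hL0 hup (ℓ / L) ℓ (by field_simp; exact le_rfl) x y
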